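/- Let 0 < β ≤ α < π and let θ ∈ ℝ. If either 0 < θ < α − β, or α + β < θ < 2π − α − β, then the series ∑_{m=1}^{∞} sin(mα) sin(mβ) sin(mθ)/m converges and its sum equals 0. -/

import Mathlib

open scoped Real
open Filter Finset

lemma sin_sum_mul_two_sin (x : ℝ) (n : ℕ) :
    (∑ i ∈ range n, Real.sin ((i + 1) * x)) * (2 * Real.sin (x / 2)) =
      Real.cos (x / 2) - Real.cos (n * x + x / 2) := by
  induction n with
  | zero => simp
  | succ n ih =>
    rw [Finset.sum_range_succ, add_mul, ih]
    have h1 := Real.cos_sub ((n + 1) * x) (x / 2)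
    have h2 := Real.cos_add ((n + 1) * x) (x / 2)
    have e : (n : ℝ) * x + x / 2 = (n + 1) * x - x / 2 := by ring
    push_cast
    rw [e]
    linear_combination h2 - h1

lemma key_sawtooth {x : ℝ} (hx0 : 0 < x) (hx2 : x < 2 * π) :
    Tendsto (fun N : ℕ => ∑ m ∈ Finset.Icc 1 N, Real.sin (m * x) / m)
      atTop (nhds ((π - x) / 2)) := by
  have hπ := Real.pi_pos
  have hc : 0 < Real.sin (x / 2) :=
    Real.sin_pos_of_pos_of_lt_pi (by linarith) (by linarith)
  -- bound on partial sums of sin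
  have hbound : ∀ n : ℕ, ‖∑ i ∈ range n, Real.sin ((i + 1) * x)‖ ≤ 1 / Real.sin (x / 2) := by
    intro n
    have ht := sin_sum_mul_two_sin x n
    rw [Real.norm_eq_abs, le_div_iff₀ hc]
    have h1 := Real.abs_cos_le_one (x / 2)
    have h2 := Real.abs_cos_le_one ((n : ℝ) * x + x / 2)
    have habs : |(∑ i ∈ range n, Real.sin ((i + 1) * x)) * (2 * Real.sin (x / 2))| ≤ 2 := by
      rw [ht]
      calc |Real.cos (x / 2) - Real.cos ((n : ℝ) * x + x / 2)|
          ≤ |Real.cos (x / 2)| + |Real.cos ((n : ℝ) * x + x / 2)| := abs_sub _ _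
        _ ≤ 2 := by linarith
    rw [abs_mul, abs_of_pos (by linarith : (0:ℝ) < 2 * Real.sin (x / 2))] at habs
    nlinarith [abs_nonneg (∑ i ∈ range n, Real.sin ((i + 1) * x))]
  -- Dirichlet test
  have hanti : Antitone (fun i : ℕ => 1 / ((i : ℝ) + 1)) := by
    intro a b hab
    have : (a : ℝ) + 1 ≤ (b : ℝ) + 1 := by exact_mod_cast by omega
    exact one_div_le_one_div_of_le (by positivity) this
  have hto0 : Tendsto (fun i : ℕ => 1 / ((i : ℝ) + 1)) atTop (nhds 0) :=
    tendsto_one_div_add_atTop_nhds_zero_nat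
  have hcauchy : CauchySeq fun n => ∑ i ∈ range n,
      (1 / ((i : ℝ) + 1)) • Real.sin ((i + 1) * x) :=
    hanti.cauchySeq_series_mul_of_tendsto_zero_of_bounded hto0 hbound
  obtain ⟨l, hl⟩ := cauchySeq_tendsto_of_complete hcauchy
  set F : ℕ → ℝ := fun n => Real.sin (n * x) / n with hF
  have hrange : Tendsto (fun n : ℕ => ∑ i ∈ range n, F i) atTop (nhds l) := by
    rw [← tendsto_add_atTop_iff_nat 1]
    have he : ∀ n : ℕ, ∑ i ∈ range (n + 1), F i =
        ∑ i ∈ range n, (1 / ((i : ℝ) + 1)) • Real.sin ((i + 1) * x) := by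
      intro n
      rw [Finset.sum_range_succ']
      simp only [hF, Nat.cast_zero, zero_mul, Real.sin_zero, zero_div, add_zero, smul_eq_mul]
      refine Finset.sum_congr rfl fun i _ => ?_
      push_cast
      ring
    simpa only [he] using hl
  -- Abel's limit theorem
  have habel := Real.tendsto_tsum_powerSeries_nhdsWithin_lt hrange
  -- the power series equals the imaginary part of -log(1 - r e^{ix})
  have hG : Tendsto (fun r : ℝ => (-(Complex.log (1 - r * Complex.exp (x * Complex.I)))).im)
      (nhdsWithin 1 (Set.Iio 1)) (nhds l) := by
    refine habel.congr' ?_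
    filter_upwards [Ioo_mem_nhdsLT_of_mem (by norm_num : (1:ℝ) ∈ Set.Ioc 0 1)] with r hr
    have hr1 : |r| < 1 := abs_lt.2 ⟨by linarith [hr.1], hr.2⟩
    have hz : ‖(r : ℂ) * Complex.exp (x * Complex.I)‖ < 1 := by
      rw [norm_mul, Complex.norm_real, Complex.norm_exp_ofReal_mul_I]
      simpa using hr1
    have hs : HasSum (fun n : ℕ => F n * r ^ n)
        ((-(Complex.log (1 - r * Complex.exp (x * Complex.I)))).im) := by
      have him := (Complex.hasSum_taylorSeries_neg_log hz).mapL Complex.imCLM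
      convert him using 2 with n
      have hzn : ((r : ℂ) * Complex.exp (x * Complex.I)) ^ n
          = (↑(r ^ n) : ℂ) * Complex.exp ((↑(n * x : ℝ)) * Complex.I) := by
        rw [mul_pow, ← Complex.exp_nat_mul]
        push_cast
        ring_nf
      have hncast : ((n : ℂ)) = ((n : ℝ) : ℂ) := by push_cast; rfl
      rw [Complex.imCLM_apply, hzn, hncast, Complex.div_ofReal_im]
      simp only [Complex.mul_im, Complex.ofReal_re, Complex.ofReal_im,
        Complex.exp_ofReal_mul_I_im, Complex.exp_ofReal_mul_I_re, hF]
      ring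
      rw [Complex.imCLM_apply]
    exact hs.tsum_eq
  -- continuity of the logarithm at r = 1
  have hw : (1 - Complex.exp (x * Complex.I)).re = 2 * Real.sin (x / 2) ^ 2 := by
    simp only [Complex.sub_re, Complex.one_re, Complex.exp_ofReal_mul_I_re]
    have h2 : Real.cos x = 1 - 2 * Real.sin (x / 2) ^ 2 := by
      have ht := Real.cos_two_mul (x / 2)
      have hp := Real.sin_sq_add_cos_sq (x / 2)
      have hx : 2 * (x / 2) = x := by ring
      rw [hx] at ht; linarith
    rw [h2]; ring
  have hslit : (1 - Complex.exp (x * Complex.I)) ∈ Complex.slitPlane := by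
    left
    rw [hw]
    positivity
  have hslit' : ((1 : ℂ) - ((1 : ℝ) : ℂ) * Complex.exp (x * Complex.I))
      ∈ Complex.slitPlane := by
    simpa using hslit
  have hcont : ContinuousAt
      (fun r : ℝ => (-(Complex.log (1 - r * Complex.exp (x * Complex.I)))).im) 1 := by
    have h1 : ContinuousAt (fun r : ℝ => (1 : ℂ) - r * Complex.exp (x * Complex.I)) 1 := by
      fun_prop
    have h2 := h1.clog hslit'
    exact Complex.continuous_im.continuousAt.comp h2.neg
  have hG2 : Tendsto (fun r : ℝ => (-(Complex.log (1 - r * Complex.exp (x * Complex.I)))).im)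
      (nhdsWithin 1 (Set.Iio 1))
      (nhds ((-(Complex.log (1 - 1 * Complex.exp (x * Complex.I)))).im)) := by
    exact (hcont.tendsto).mono_left nhdsWithin_le_nhds
  have hlval : l = (-(Complex.log (1 - 1 * Complex.exp (x * Complex.I)))).im :=
    tendsto_nhds_unique hG hG2
  -- compute the value
  have harg : (1 - Complex.exp (x * Complex.I)).arg = (x - π) / 2 := by
    have hrepr : (1 : ℂ) - Complex.exp (x * Complex.I)
        = (↑(2 * Real.sin (x / 2)) : ℂ) *
          (Real.cos ((x - π) / 2) + Real.sin ((x - π) / 2) * Complex.I) := by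
      rw [Complex.exp_mul_I]
      apply Complex.ext
      · simp only [Complex.sub_re, Complex.one_re, Complex.add_re, Complex.mul_re,
          Complex.ofReal_re, Complex.ofReal_im, Complex.add_im, Complex.mul_im,
          Complex.I_re, Complex.I_im, Complex.cos_ofReal_re, Complex.sin_ofReal_re,
          Complex.cos_ofReal_im, Complex.sin_ofReal_im]
        have e : (x - π) / 2 = x / 2 - π / 2 := by ring
        rw [e, Real.cos_sub_pi_div_two]
        have h2 : Real.cos x = 1 - 2 * Real.sin (x / 2) ^ 2 := by
          have ht := Real.cos_two_mul (x / 2)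
          have hp := Real.sin_sq_add_cos_sq (x / 2)
          have hx : 2 * (x / 2) = x := by ring
          rw [hx] at ht; linarith
        rw [h2]; ring
      · simp only [Complex.sub_im, Complex.one_im, Complex.add_im, Complex.mul_im,
          Complex.ofReal_re, Complex.ofReal_im, Complex.add_re, Complex.mul_re,
          Complex.I_re, Complex.I_im, Complex.cos_ofReal_re, Complex.sin_ofReal_re,
          Complex.cos_ofReal_im, Complex.sin_ofReal_im]
        have e : (x - π) / 2 = x / 2 - π / 2 := by ring
        rw [e, Real.sin_sub_pi_div_two]
        have h2 : Real.sin x = 2 * Real.sin (x / 2) * Real.cos (x / 2) := by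
          have := Real.sin_two_mul (x / 2)
          rw [← this]; ring_nf
        rw [h2]; ring
    rw [hrepr, Complex.arg_real_mul _ (by positivity : (0:ℝ) < 2 * Real.sin (x / 2))]
    rw [Complex.ofReal_cos, Complex.ofReal_sin]
    exact Complex.arg_cos_add_sin_mul_I (Set.mem_Ioc.mpr ⟨by linarith, by linarith⟩)
  have hval : (-(Complex.log (1 - 1 * Complex.exp (x * Complex.I)))).im = (π - x) / 2 := by
    rw [one_mul, Complex.neg_im, Complex.log_im, harg]
    ring
  rw [hlval, hval] at hrange
  -- convert range-sums to Icc-sums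
  have hIcc : ∀ N : ℕ, ∑ m ∈ Finset.Icc 1 N, Real.sin (m * x) / m
      = ∑ i ∈ range (N + 1), F i := by
    intro N
    induction N with
    | zero => simp [hF]
    | succ N ih =>
      rw [Finset.sum_Icc_succ_top (by omega : 1 ≤ N + 1), ih]
      rw [Finset.sum_range_succ (n := N + 1), Finset.sum_range_succ (n := N)]
  refine Tendsto.congr (fun N => (hIcc N).symm) ?_
  exact (tendsto_add_atTop_iff_nat 1).mpr hrange

lemma trig_id (a b t : ℝ) : Real.sin a * Real.sin b * Real.sin t =
    (Real.sin (t + a - b) + Real.sin (t - a + b)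
      - Real.sin (t + a + b) - Real.sin (t - a - b)) / 4 := by
  simp only [Real.sin_add, Real.sin_sub, Real.cos_add, Real.cos_sub]
  ring

/-- Outside the interval `[α - β, α + β]` (within `(0, 2π - α - β)`), the series
`∑_{m ≥ 1} sin (m α) sin (m β) sin (m θ) / m` converges to `0`. -/
theorem sum_sin_sin_sin_div_eq_zero (α β θ : ℝ) (hβ0 : 0 < β) (hβα : β ≤ α) (hαπ : α < π)
    (h : (0 < θ ∧ θ < α - β) ∨ (α + β < θ ∧ θ < 2 * π - α - β)) :
    Filter.Tendsto
      (fun N : ℕ => ∑ m ∈ Finset.Icc 1 N,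
        Real.sin (m * α) * Real.sin (m * β) * Real.sin (m * θ) / m)
      Filter.atTop (nhds 0) := by
  have hπ := Real.pi_pos
  rcases h with ⟨h1, h2⟩ | ⟨h1, h2⟩
  · -- 0 < θ < α - β
    have k1 := key_sawtooth (x := θ + α - β) (by linarith) (by linarith)
    have k2 := key_sawtooth (x := α - β - θ) (by linarith) (by linarith)
    have k3 := key_sawtooth (x := θ + α + β) (by linarith) (by linarith)
    have k4 := key_sawtooth (x := α + β - θ) (by linarith) (by linarith)
    have hcomb := (((k1.sub k2).sub k3).add k4).div_const 4
    have hzero : ((π - (θ + α - β)) / 2 - (π - (α - β - θ)) / 2 - (π - (θ + α + β)) / 2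
        + (π - (α + β - θ)) / 2) / 4 = 0 := by ring
    rw [hzero] at hcomb
    refine hcomb.congr fun N => ?_
    rw [← Finset.sum_sub_distrib, ← Finset.sum_sub_distrib, ← Finset.sum_add_distrib,
      Finset.sum_div]
    refine Finset.sum_congr rfl fun m _ => ?_
    have hm : Real.sin (m * α) * Real.sin (m * β) * Real.sin (m * θ) =
        (Real.sin ((m : ℝ) * (θ + α - β)) - Real.sin ((m : ℝ) * (α - β - θ))
          - Real.sin ((m : ℝ) * (θ + α + β)) + Real.sin ((m : ℝ) * (α + β - θ))) / 4 := by
      rw [trig_id ((m : ℝ) * α) ((m : ℝ) * β) ((m : ℝ) * θ),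
        show (m : ℝ) * (θ + α - β) = m * θ + m * α - m * β from by ring,
        show (m : ℝ) * (α - β - θ) = -(m * θ - m * α + m * β) from by ring,
        show (m : ℝ) * (θ + α + β) = m * θ + m * α + m * β from by ring,
        show (m : ℝ) * (α + β - θ) = -(m * θ - m * α - m * β) from by ring,
        Real.sin_neg, Real.sin_neg]
      ring
    rw [hm]
    ring
  · -- α + β < θ < 2π - α - β
    have k1 := key_sawtooth (x := θ + α - β) (by linarith) (by linarith)
    have k2 := key_sawtooth (x := θ - α + β) (by linarith) (by linarith)
    have k3 := key_sawtooth (x := θ + α + β) (by linarith) (by linarith)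
    have k4 := key_sawtooth (x := θ - α - β) (by linarith) (by linarith)
    have hcomb := (((k1.add k2).sub k3).sub k4).div_const 4
    have hzero : ((π - (θ + α - β)) / 2 + (π - (θ - α + β)) / 2 - (π - (θ + α + β)) / 2
        - (π - (θ - α - β)) / 2) / 4 = 0 := by ring
    rw [hzero] at hcomb
    refine hcomb.congr fun N => ?_
    rw [← Finset.sum_add_distrib, ← Finset.sum_sub_distrib, ← Finset.sum_sub_distrib,
      Finset.sum_div]
    refine Finset.sum_congr rfl fun m _ => ?_
    have hm : Real.sin (m * α) * Real.sin (m * β) * Real.sin (m * θ) =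
        (Real.sin ((m : ℝ) * (θ + α - β)) + Real.sin ((m : ℝ) * (θ - α + β))
          - Real.sin ((m : ℝ) * (θ + α + β)) - Real.sin ((m : ℝ) * (θ - α - β))) / 4 := by
      rw [trig_id ((m : ℝ) * α) ((m : ℝ) * β) ((m : ℝ) * θ),
        show (m : ℝ) * (θ + α - β) = m * θ + m * α - m * β from by ring,
        show (m : ℝ) * (θ - α + β) = m * θ - m * α + m * β from by ring,
        show (m : ℝ) * (θ + α + β) = m * θ + m * α + m * β from by ring,
        show (m : ℝ) * (θ - α - β) = m * θ - m * α - m * β from by ring]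
    rw [hm]
    ring
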